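/- Let A be an n×n real matrix such that for every sign vector d (|d_i| ≤ 1) the matrix A + diag(d) is invertible, and define c(A) = max over ‖d‖_∞ ≤ 1 of ‖(A − diag(d))⁻¹‖ for a fixed operator norm. If x₁ solves Ax₁ − |x₁| = b₁ and x₂ solves Ax₂ − |x₂| = b₂, then ‖x₁ − x₂‖ ≤ c(A)·‖b₁ − b₂‖. -/

import Mathlib

open Matrix Metric Set

set_option maxHeartbeats 1000000

theorem stmt_7 (n : ℕ) (A : Matrix (Fin n) (Fin n) ℝ)
    (vN : Seminorm ℝ (Fin n → ℝ)) (hdef : ∀ x, vN x = 0 → x = 0)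
    (hreg : ∀ d : Fin n → ℝ, ‖d‖ ≤ 1 → IsUnit (A + Matrix.diagonal d))
    (b₁ b₂ x₁ x₂ : Fin n → ℝ)
    (h₁ : A.mulVec x₁ - (fun i => |x₁ i|) = b₁)
    (h₂ : A.mulVec x₂ - (fun i => |x₂ i|) = b₂) :
    vN (x₁ - x₂) ≤
      sSup {r | ∃ d : Fin n → ℝ, ‖d‖ ≤ 1 ∧
          r = sSup {s | ∃ x : Fin n → ℝ, vN x = 1 ∧
                s = vN ((A - Matrix.diagonal d)⁻¹.mulVec x)}} *
        vN (b₁ - b₂) := by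
  classical
  by_cases hx : x₁ = x₂
  · have hb : b₁ = b₂ := by rw [← h₁, ← h₂, hx]
    simp [hx, hb]
  -- invertibility of A - diagonal d' for any small d'
  have hreg' : ∀ d' : Fin n → ℝ, ‖d'‖ ≤ 1 → IsUnit (A - Matrix.diagonal d') := by
    intro d' hd'
    have h0 := hreg (-d') (by rwa [norm_neg])
    have key : A + Matrix.diagonal (-d') = A - Matrix.diagonal d' := by
      rw [sub_eq_add_neg]
      congr 1
      ext i j
      by_cases h : i = j <;> simp [Matrix.diagonal_apply, h]
    rwa [key] at h0
  set u := x₁ - x₂ with hu_def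
  have hu0 : u ≠ 0 := sub_ne_zero.mpr hx
  set v := b₁ - b₂ with hv_def
  set d : Fin n → ℝ := fun i =>
    if x₁ i - x₂ i = 0 then 0 else (|x₁ i| - |x₂ i|) / (x₁ i - x₂ i) with hd_def
  have hdact : ∀ i, d i * (x₁ i - x₂ i) = |x₁ i| - |x₂ i| := by
    intro i
    by_cases h : x₁ i - x₂ i = 0
    · have hxx : x₁ i = x₂ i := sub_eq_zero.mp h
      simp [hd_def, h, hxx]
    · simp [hd_def, h, div_mul_cancel₀]
  have hdn : ‖d‖ ≤ 1 := by
    rw [pi_norm_le_iff_of_nonneg zero_le_one]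
    intro i
    rw [Real.norm_eq_abs]
    by_cases h : x₁ i - x₂ i = 0
    · simp [hd_def, h]
    · simp only [hd_def, if_neg h, abs_div]
      rw [div_le_one (abs_pos.mpr h)]
      exact abs_abs_sub_abs_le_abs_sub _ _
  set M := A - Matrix.diagonal d with hM_def
  have hM : IsUnit M := hreg' d hdn
  have hMdet : IsUnit M.det := (Matrix.isUnit_iff_isUnit_det M).mp hM
  have hMu : M.mulVec u = v := by
    funext i
    have e1 : M.mulVec u i = A.mulVec u i - (Matrix.diagonal d).mulVec u i := by
      rw [hM_def, Matrix.sub_mulVec]; rfl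
    have e2 : A.mulVec u i = A.mulVec x₁ i - A.mulVec x₂ i := by
      rw [hu_def, Matrix.mulVec_sub]; rfl
    have e3 : (Matrix.diagonal d).mulVec u i = d i * (x₁ i - x₂ i) := by
      rw [Matrix.mulVec_diagonal]; rfl
    have e4 : v i = (A.mulVec x₁ i - |x₁ i|) - (A.mulVec x₂ i - |x₂ i|) := by
      rw [hv_def, ← h₁, ← h₂]; rfl
    rw [e1, e2, e3, e4, hdact i]; ring
  have hu : u = M⁻¹.mulVec v := by
    rw [← hMu, Matrix.mulVec_mulVec, Matrix.nonsing_inv_mul M hMdet, Matrix.one_mulVec]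
  have hv0 : v ≠ 0 := fun h => hu0 (by rw [hu, h, Matrix.mulVec_zero])
  -- subadditivity over sums
  have subadd : ∀ (s : Finset (Fin n)) (g : Fin n → (Fin n → ℝ)),
      vN (∑ i ∈ s, g i) ≤ ∑ i ∈ s, vN (g i) := by
    intro s g
    induction s using Finset.induction with
    | empty => simp
    | insert _ _ h ih =>
      rw [Finset.sum_insert h, Finset.sum_insert h]
      exact (map_add_le_add vN _ _).trans (by linarith)
  -- easy direction of norm equivalence
  set e : Fin n → (Fin n → ℝ) := fun i => Pi.single i 1 with he_def
  set C : ℝ := ∑ i, vN (e i) with hC_def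
  have hC0 : 0 ≤ C := Finset.sum_nonneg fun i _ => apply_nonneg vN _
  have hsum : ∀ x : Fin n → ℝ, vN x ≤ C * ‖x‖ := by
    intro x
    have hxrep : x = ∑ i, x i • e i := by
      funext j
      simp [he_def, Finset.sum_apply, Pi.single_apply, mul_ite, Finset.sum_ite_eq']
    calc vN x = vN (∑ i, x i • e i) := by rw [← hxrep]
      _ ≤ ∑ i, vN (x i • e i) := subadd _ _
      _ ≤ ∑ i, ‖x‖ * vN (e i) := by
          refine Finset.sum_le_sum fun i _ => ?_
          rw [map_smul_eq_mul]
          exact mul_le_mul_of_nonneg_right (norm_le_pi_norm x i) (apply_nonneg vN _)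
      _ = C * ‖x‖ := by rw [← Finset.mul_sum, hC_def, mul_comm]
  have hvNcont : Continuous (fun x => vN x) := by
    have hlip : LipschitzWith (Real.toNNReal C) (fun x => vN x) := by
      apply LipschitzWith.of_dist_le_mul
      intro a b
      rw [Real.dist_eq, dist_eq_norm, Real.coe_toNNReal C hC0]
      exact (abs_sub_map_le_sub vN a b).trans (hsum _)
    exact hlip.continuous
  -- hard direction of norm equivalence
  have hne : (sphere (0 : Fin n → ℝ) 1).Nonempty := by
    refine ⟨‖u‖⁻¹ • u, ?_⟩
    rw [mem_sphere_zero_iff_norm, norm_smul, norm_inv, norm_norm,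
      inv_mul_cancel₀ (norm_ne_zero_iff.mpr hu0)]
  obtain ⟨x₀, hx₀S, hx₀min⟩ :=
    (isCompact_sphere (0 : Fin n → ℝ) 1).exists_isMinOn hne hvNcont.continuousOn
  set m := vN x₀ with hm_def
  have hx₀0 : x₀ ≠ 0 := by
    intro h
    rw [mem_sphere_zero_iff_norm, h, norm_zero] at hx₀S
    exact one_ne_zero hx₀S.symm
  have hm0 : 0 < m :=
    lt_of_le_of_ne (apply_nonneg vN x₀) (fun h => hx₀0 (hdef x₀ h.symm))
  have hmle : ∀ x, m * ‖x‖ ≤ vN x := by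
    intro x
    by_cases h : x = 0
    · simp [h]
    · have hxn : ‖x‖ ≠ 0 := norm_ne_zero_iff.mpr h
      have hmem : ‖x‖⁻¹ • x ∈ sphere (0 : Fin n → ℝ) 1 := by
        rw [mem_sphere_zero_iff_norm, norm_smul, norm_inv, norm_norm, inv_mul_cancel₀ hxn]
      have hlow : vN x₀ ≤ vN (‖x‖⁻¹ • x) := isMinOn_iff.mp hx₀min _ hmem
      simp only [map_smul_eq_mul, norm_inv, norm_norm] at hlow
      calc m * ‖x‖ ≤ (‖x‖⁻¹ * vN x) * ‖x‖ := mul_le_mul_of_nonneg_right hlow (norm_nonneg x)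
        _ = vN x := by field_simp
  -- uniform bound over the compact parameter set
  set S : Set ((Fin n → ℝ) × (Fin n → ℝ)) := closedBall 0 1 ×ˢ closedBall 0 m⁻¹ with hS_def
  set f : ((Fin n → ℝ) × (Fin n → ℝ)) → ℝ :=
    fun q => vN ((A - Matrix.diagonal q.1)⁻¹.mulVec q.2) with hf_def
  have hScomp : IsCompact S := (isCompact_closedBall _ _).prod (isCompact_closedBall _ _)
  have hfcont : ContinuousOn f S := by
    intro p hp
    apply ContinuousAt.continuousWithinAt
    have hp1 : ‖p.1‖ ≤ 1 := by
      have := (Set.mem_prod.mp hp).1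
      rwa [mem_closedBall_zero_iff] at this
    have hdet : (A - Matrix.diagonal p.1).det ≠ 0 :=
      ((Matrix.isUnit_iff_isUnit_det _).mp (hreg' p.1 hp1)).ne_zero
    have hcont1 : Continuous (fun q : (Fin n → ℝ) × (Fin n → ℝ) => A - Matrix.diagonal q.1) :=
      continuous_const.sub continuous_fst.matrix_diagonal
    have hinvAt : ContinuousAt Inv.inv (A - Matrix.diagonal p.1) := by
      refine continuousAt_matrix_inv _ ?_
      rw [Ring.inverse_eq_inv']
      exact continuousAt_inv₀ hdet
    have h1 : ContinuousAt (fun q : (Fin n → ℝ) × (Fin n → ℝ) =>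
        (A - Matrix.diagonal q.1)⁻¹) p := by
      have := ContinuousAt.comp (g := Inv.inv)
        (f := fun q : (Fin n → ℝ) × (Fin n → ℝ) => A - Matrix.diagonal q.1)
        hinvAt hcont1.continuousAt
      simpa [Function.comp_def] using this
    have hbil : Continuous (fun r : Matrix (Fin n) (Fin n) ℝ × (Fin n → ℝ) =>
        r.1.mulVec r.2) := continuous_fst.matrix_mulVec continuous_snd
    have h2 : ContinuousAt (fun q : (Fin n → ℝ) × (Fin n → ℝ) =>
        (A - Matrix.diagonal q.1)⁻¹.mulVec q.2) p := by
      have := ContinuousAt.comp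
        (g := fun r : Matrix (Fin n) (Fin n) ℝ × (Fin n → ℝ) => r.1.mulVec r.2)
        (f := fun q : (Fin n → ℝ) × (Fin n → ℝ) => ((A - Matrix.diagonal q.1)⁻¹, q.2))
        hbil.continuousAt (h1.prodMk continuous_snd.continuousAt)
      simpa [Function.comp_def] using this
    have h3 := ContinuousAt.comp (g := fun y => vN y)
      (f := fun q : (Fin n → ℝ) × (Fin n → ℝ) => (A - Matrix.diagonal q.1)⁻¹.mulVec q.2)
      hvNcont.continuousAt h2
    simpa [hf_def, Function.comp_def] using h3
  obtain ⟨K₀, hK₀⟩ := hScomp.exists_bound_of_continuousOn hfcont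
  have h0S : ((0 : Fin n → ℝ), (0 : Fin n → ℝ)) ∈ S :=
    Set.mem_prod.mpr ⟨mem_closedBall_self zero_le_one,
      mem_closedBall_self (inv_nonneg.mpr hm0.le)⟩
  have hK₀0 : 0 ≤ K₀ := (norm_nonneg _).trans (hK₀ _ h0S)
  have hbound : ∀ d' : Fin n → ℝ, ‖d'‖ ≤ 1 →
      ∀ s' ∈ {s | ∃ x : Fin n → ℝ, vN x = 1 ∧
        s = vN ((A - Matrix.diagonal d')⁻¹.mulVec x)}, s' ≤ K₀ := by
    rintro d' hd' s' ⟨x, hx1, rfl⟩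
    have hxle : ‖x‖ ≤ m⁻¹ := by
      have h3 := hmle x
      rw [hx1] at h3
      rw [← one_div]
      rw [le_div_iff₀ hm0, mul_comm]
      exact h3
    have hmem : (d', x) ∈ S :=
      Set.mem_prod.mpr ⟨mem_closedBall_zero_iff.mpr hd', mem_closedBall_zero_iff.mpr hxle⟩
    have := hK₀ (d', x) hmem
    rw [Real.norm_eq_abs] at this
    exact (le_abs_self _).trans this
  have houter : ∀ r ∈ {r | ∃ d' : Fin n → ℝ, ‖d'‖ ≤ 1 ∧
      r = sSup {s | ∃ x : Fin n → ℝ, vN x = 1 ∧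
        s = vN ((A - Matrix.diagonal d')⁻¹.mulVec x)}}, r ≤ K₀ := by
    rintro r ⟨d', hd', rfl⟩
    exact Real.sSup_le (hbound d' hd') hK₀0
  -- final computation
  have ht : 0 < vN v :=
    lt_of_le_of_ne (apply_nonneg vN v) (fun h => hv0 (hdef v h.symm))
  set t := vN v with ht_def
  have hy1 : vN (t⁻¹ • v) = 1 := by
    rw [map_smul_eq_mul, Real.norm_eq_abs, abs_of_pos (inv_pos.mpr ht), inv_mul_cancel₀ ht.ne']
  have hs₀ : vN (M⁻¹.mulVec (t⁻¹ • v)) = t⁻¹ * vN u := by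
    rw [Matrix.mulVec_smul, map_smul_eq_mul, Real.norm_eq_abs, abs_of_pos (inv_pos.mpr ht), ← hu]
  have hmem1 : vN (M⁻¹.mulVec (t⁻¹ • v)) ∈ {s | ∃ x : Fin n → ℝ, vN x = 1 ∧
      s = vN ((A - Matrix.diagonal d)⁻¹.mulVec x)} := ⟨t⁻¹ • v, hy1, by rw [hM_def]⟩
  have hle1 : vN (M⁻¹.mulVec (t⁻¹ • v)) ≤ sSup {s | ∃ x : Fin n → ℝ, vN x = 1 ∧
      s = vN ((A - Matrix.diagonal d)⁻¹.mulVec x)} :=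
    le_csSup ⟨K₀, fun s hs => hbound d hdn s hs⟩ hmem1
  have hmem2 : sSup {s | ∃ x : Fin n → ℝ, vN x = 1 ∧
      s = vN ((A - Matrix.diagonal d)⁻¹.mulVec x)} ∈
      {r | ∃ d' : Fin n → ℝ, ‖d'‖ ≤ 1 ∧
        r = sSup {s | ∃ x : Fin n → ℝ, vN x = 1 ∧
          s = vN ((A - Matrix.diagonal d')⁻¹.mulVec x)}} := ⟨d, hdn, rfl⟩
  have hle2 : sSup {s | ∃ x : Fin n → ℝ, vN x = 1 ∧
      s = vN ((A - Matrix.diagonal d)⁻¹.mulVec x)} ≤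
      sSup {r | ∃ d' : Fin n → ℝ, ‖d'‖ ≤ 1 ∧
        r = sSup {s | ∃ x : Fin n → ℝ, vN x = 1 ∧
          s = vN ((A - Matrix.diagonal d')⁻¹.mulVec x)}} :=
    le_csSup ⟨K₀, fun r hr => houter r hr⟩ hmem2
  calc vN u = (t⁻¹ * vN u) * t := by field_simp
    _ = vN (M⁻¹.mulVec (t⁻¹ • v)) * t := by rw [hs₀]
    _ ≤ _ := mul_le_mul_of_nonneg_right (hle1.trans hle2) ht.le
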